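/- arXiv:math/0608229 — 2 statements merged into one kernel-verified Lean document; each statement's English description precedes it below -/
import Mathlib

section
/- Let X be a connected, countably infinite graph with bounded degree, let Γ be a countable group acting on X freely and cofinitely, and let F be a finite connected fundamental domain. If Γ admits a Følner sequence (i.e., for every finite subset A⊂Γ and every ε>0 there exists a nonempty finite E⊂Γ with |E·A ∖ E| < ε·|E|), then X admits an amenable exhaustion: there exist finite subsets Eₙ⊂Γ such that the subgraphs Kₙ := ∪_{γ∈Eₙ} γF satisfy Kₙ⊂Kₙ₊₁ for all n, ∪ₙKₙ = X, and |𝓕Kₙ|/|VKₙ| → 0 as n→∞, where 𝓕Kₙ := {v∈VKₙ : dist(v, VX∖VKₙ) = 1} (graph distance). In particular, X is an amenable graph. -/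
open scoped Pointwise

noncomputable section

set_option maxHeartbeats 3000000 in
/-- Theorem 7.2: if `Γ` is amenable (admits a Følner sequence) and acts freely and
cofinitely on the connected countably infinite graph `X` with bounded degree, with
finite connected fundamental domain `F`, then `X` admits an amenable exhaustion
`Kₙ = ∪_{γ∈Eₙ} γF`. -/
theorem amenable_exhaustion_exists
    {V E Γ : Type*} [Countable V] [Countable E] [Infinite V]
    [Group Γ] [Countable Γ] [DecidableEq Γ] [MulAction Γ V] [MulAction Γ E]
    -- the graph in the sense of Serre, connected, countably infinite, bounded degree
    (o t : E → V) (bar : E → E)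
    (hbar_invol : ∀ e, bar (bar e) = e)
    (hbar_ne : ∀ e, bar e ≠ e)
    (ho_bar : ∀ e, o (bar e) = t e)
    (hconn : ∀ u v : V, Relation.ReflTransGen (fun a b => ∃ e, o e = a ∧ t e = b) u v)
    (d : ℕ) (hfib : ∀ v, {e | o e = v}.Finite)
    (hdeg : ∀ v, Nat.card {e // o e = v} ≤ d)
    -- Γ acts by automorphisms of the graph
    (ho_smul : ∀ (γ : Γ) (e : E), o (γ • e) = γ • o e)
    (ht_smul : ∀ (γ : Γ) (e : E), t (γ • e) = γ • t e)
    (hbar_smul : ∀ (γ : Γ) (e : E), bar (γ • e) = γ • bar e)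
    -- without inversions
    (hnoinv : ∀ (γ : Γ) (e : E), γ • e ≠ bar e)
    -- freely
    (hfree : ∀ (γ : Γ) (v : V), γ • v = v → γ = 1)
    -- with finite connected fundamental domain F = (VF, EF): EF contains exactly one
    -- representative of each Γ-orbit of geometric edges {e, ē} (cofiniteness)
    (EF : Set E) (hEFfin : EF.Finite)
    (hEF : ∀ e : E, ∃! f, f ∈ EF ∧ ∃ γ : Γ, γ • e = f ∨ γ • bar e = f)
    (VF : Set V) (hVF : VF = o '' EF ∪ t '' EF)
    (hFconn : ∀ u v : V, u ∈ VF → v ∈ VF →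
      Relation.ReflTransGen
        (fun a b => ∃ e, (e ∈ EF ∨ bar e ∈ EF) ∧ o e = a ∧ t e = b) u v)
    -- Γ admits a Følner sequence (amenability)
    (hfolner : ∀ (S : Finset Γ) (ε : ℝ), 0 < ε →
      ∃ Efin : Finset Γ, Efin.Nonempty ∧ (((Efin * S) \ Efin).card : ℝ) < ε * Efin.card) :
    -- X admits an amenable exhaustion Kₙ := ∪_{γ ∈ Eₙ} γF
    ∃ (Es : ℕ → Finset Γ) (K : ℕ → Set V),
      (∀ n, K n = ⋃ γ ∈ (Es n : Set Γ), (fun x => γ • x) '' VF) ∧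
      -- Kₙ ⊆ Kₙ₊₁
      (∀ n, Es n ⊆ Es (n + 1)) ∧
      (∀ n, K n ⊆ K (n + 1)) ∧
      -- ∪ₙ Kₙ = X
      (⋃ n, K n) = (Set.univ : Set V) ∧
      (⋃ n, ⋃ γ ∈ (Es n : Set Γ), (fun e => γ • e) '' (EF ∪ bar '' EF)) =
        (Set.univ : Set E) ∧
      -- |𝓕Kₙ|/|VKₙ| → 0, where 𝓕Kₙ = {v ∈ VKₙ : dist(v, VX∖VKₙ) = 1}
      Filter.Tendsto
        (fun n => (Nat.card {v : V // v ∈ K n ∧ ∃ e, o e = v ∧ t e ∉ K n} : ℝ) /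
          (Nat.card (K n) : ℝ))
        Filter.atTop (nhds 0) := by
  classical
  -- VF is finite
  have hVFfin : VF.Finite := by
    rw [hVF]; exact (hEFfin.image o).union (hEFfin.image t)
  -- every vertex has an outgoing edge
  have hedge : ∀ v : V, ∃ e, o e = v := by
    intro v
    obtain ⟨u, hu⟩ := exists_ne v
    rcases (hconn v u).cases_head with h | ⟨c, ⟨e, he, _⟩, _⟩
    · exact absurd h.symm hu
    · exact ⟨e, he⟩
  -- every vertex can be moved into VF
  have hmove : ∀ v : V, ∃ γ : Γ, γ • v ∈ VF := by
    intro v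
    obtain ⟨e, he⟩ := hedge v
    obtain ⟨f, ⟨hfEF, γ, hγ⟩, -⟩ := hEF e
    rcases hγ with h | h
    · refine ⟨γ, ?_⟩
      have h1 : o (γ • e) = γ • v := by rw [ho_smul, he]
      rw [h] at h1
      rw [← h1, hVF]
      exact Or.inl ⟨f, hfEF, rfl⟩
    · refine ⟨γ, ?_⟩
      have hv : t (bar e) = v := by rw [← ho_bar, hbar_invol, he]
      have h1 : t (γ • bar e) = γ • v := by rw [ht_smul, hv]
      rw [h] at h1
      rw [← h1, hVF]
      exact Or.inr ⟨f, hfEF, rfl⟩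
  -- every edge can be moved into EF ∪ bar '' EF
  have hmoveE : ∀ e : E, ∃ γ : Γ, γ • e ∈ EF ∪ bar '' EF := by
    intro e
    obtain ⟨f, ⟨hfEF, γ, hγ⟩, -⟩ := hEF e
    rcases hγ with h | h
    · exact ⟨γ, Or.inl (h ▸ hfEF)⟩
    · refine ⟨γ, Or.inr ⟨f, hfEF, ?_⟩⟩
      have : bar (γ • e) = f := by rw [hbar_smul, h]
      rw [← this, hbar_invol]
  obtain ⟨v1⟩ : Nonempty V := inferInstance
  obtain ⟨e1, he1⟩ := hedge v1
  haveI : Nonempty E := ⟨e1⟩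
  -- Γ is infinite
  have hΓinf : Infinite Γ := by
    by_contra h
    have hfin : Finite Γ := not_infinite_iff_finite.mp h
    choose g hg using hmove
    haveI : Finite ↥VF := hVFfin
    have hinj : Function.Injective (fun v : V => ((g v, ⟨g v • v, hg v⟩) : Γ × ↥VF)) := by
      intro a b hab
      simp only [Prod.mk.injEq, Subtype.mk.injEq] at hab
      obtain ⟨h1, h2⟩ := hab
      rw [h1] at h2
      exact MulAction.injective (g b) h2
    haveI := Finite.of_injective _ hinj
    exact not_finite V
  -- v0 : a vertex of VF
  obtain ⟨γ0, hγ0⟩ := hmove v1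
  set v0 : V := γ0 • v1 with hv0
  -- 1 ≤ d
  have hd1 : 1 ≤ d := by
    obtain ⟨e0, -⟩ := hedge v1
    haveI : Finite {e // o e = o e0} := hfib (o e0)
    haveI : Nonempty {e // o e = o e0} := ⟨⟨e0, rfl⟩⟩
    exact le_trans Nat.card_pos (hdeg (o e0))
  -- the finite set S of "adjacency" group elements
  set Sset : Set Γ := {s | ∃ e, o e ∈ VF ∧ t e ∈ s • VF} with hSset
  have hSsetfin : Sset.Finite := by
    have hEout : {e | o e ∈ VF}.Finite := by
      have h1 : {e | o e ∈ VF} = ⋃ v ∈ VF, {e | o e = v} := by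
        ext e; simp
      rw [h1]; exact hVFfin.biUnion (fun v _ => hfib v)
    have key : ∀ s ∈ Sset, ∃ p : E × V, o p.1 ∈ VF ∧ p.2 ∈ VF ∧ s • p.2 = t p.1 := by
      rintro s ⟨e, he, hte⟩
      obtain ⟨u, hu, hsu⟩ := hte
      exact ⟨(e, u), he, hu, hsu⟩
    choose! p hp1 hp2 hp3 using key
    apply Set.Finite.of_finite_image (f := p)
    · apply Set.Finite.subset (hEout.prod hVFfin)
      rintro x ⟨s, hs, rfl⟩
      exact ⟨hp1 s hs, hp2 s hs⟩
    · intro s hs s' hs' hpe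
      have h1 : s • (p s).2 = t (p s).1 := hp3 s hs
      have h2 : s' • (p s').2 = t (p s').1 := hp3 s' hs'
      rw [← hpe] at h2
      have h3 : (s'⁻¹ * s) • (p s).2 = (p s).2 := by
        rw [mul_smul, h1, ← h2, inv_smul_smul]
      have := hfree _ _ h3
      rw [inv_mul_eq_one] at this
      exact this.symm
  set S : Finset Γ := hSsetfin.toFinset with hS
  -- fibers of t are finite and of size ≤ d
  have hTfinset : ∀ w : V, {e | t e = w}.Finite := by
    intro w
    apply Set.Finite.of_finite_image (f := bar)
    · apply (hfib w).subset
      rintro x ⟨e, he, rfl⟩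
      simpa [ho_bar] using he
    · intro a _ b _ hab
      have := congrArg bar hab
      rwa [hbar_invol, hbar_invol] at this
  have hTcard : ∀ w : V, ((hTfinset w).toFinset.card : ℕ) ≤ d := by
    intro w
    have h1 : (hTfinset w).toFinset.card = Nat.card {e // t e = w} := by
      rw [← Set.ncard_eq_toFinset_card _ (hTfinset w), ← Nat.card_coe_set_eq]
      rfl
    rw [h1]
    haveI : Finite {e // o e = w} := hfib w
    calc Nat.card {e // t e = w}
        ≤ Nat.card {e // o e = w} := by
          apply Nat.card_le_card_of_injective
            (fun x => (⟨bar x.1, by rw [ho_bar]; exact x.2⟩ : {e // o e = w}))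
          intro a b hab
          simp only [Subtype.mk.injEq] at hab
          have := congrArg bar hab
          rw [hbar_invol, hbar_invol] at this
          exact Subtype.ext this
      _ ≤ d := hdeg w
  -- the key Følner claim: Følner sets containing any prescribed finite set
  have claim : ∀ (T : Finset Γ) (n : ℕ), ∃ Efin : Finset Γ, T ⊆ Efin ∧ Efin.Nonempty ∧
      (((Efin * S) \ Efin).card : ℝ) < (1 / (n + 1)) * Efin.card := by
    intro T n
    have hε : (0 : ℝ) < 1 / (2 * (n + 1)) := by positivity
    set N : ℕ := 2 * (2 * (n + 1) * (T * S).card) + 2 with hN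
    set Sbig : Finset Γ := S ∪ (Finset.range N).image (Infinite.natEmbedding Γ) with hSbig
    obtain ⟨E', hE'ne, hE'⟩ := hfolner Sbig (1 / (2 * (n + 1))) hε
    -- lower bound on the size of E'
    have hNle : (N : ℝ) ≤ Sbig.card := by
      have h1 : ((Finset.range N).image (Infinite.natEmbedding Γ)).card = N := by
        rw [Finset.card_image_of_injective _ (Infinite.natEmbedding Γ).injective,
          Finset.card_range]
      have h2 := Finset.card_le_card (Finset.subset_union_right
        (s₁ := S) (s₂ := (Finset.range N).image (Infinite.natEmbedding Γ)))
      rw [h1] at h2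
      exact_mod_cast h2
    have hSbigE' : (Sbig.card : ℝ) ≤ (E' * Sbig).card := by
      exact_mod_cast Finset.card_le_card_mul_left hE'ne
    have hsplit : ((E' * Sbig).card : ℝ) ≤ E'.card + ((E' * Sbig) \ E').card := by
      have h1 : E' * Sbig ⊆ E' ∪ ((E' * Sbig) \ E') := by
        intro a ha
        by_cases h : a ∈ E'
        · exact Finset.mem_union_left _ h
        · exact Finset.mem_union_right _ (Finset.mem_sdiff.mpr ⟨ha, h⟩)
      calc ((E' * Sbig).card : ℝ) ≤ ((E' ∪ ((E' * Sbig) \ E')).card : ℝ) := by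
            exact_mod_cast Finset.card_le_card h1
        _ ≤ E'.card + ((E' * Sbig) \ E').card := by
            exact_mod_cast Finset.card_union_le _ _
    have hεle : (1 : ℝ) / (2 * (n + 1)) ≤ 1 := by
      rw [div_le_one (by positivity)]
      nlinarith [Nat.cast_nonneg (α := ℝ) n]
    have hE'big : (N : ℝ) ≤ 2 * E'.card := by
      have h0 : (0 : ℝ) ≤ E'.card := Nat.cast_nonneg _
      nlinarith [hNle, hSbigE', hsplit, hE']
    have hTS : ((T * S).card : ℝ) < (1 / (2 * (n + 1))) * E'.card := by
      rw [hN] at hE'big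
      push_cast at hE'big
      have hx : (0:ℝ) < 2 * ((n:ℝ) + 1) := by positivity
      rw [div_mul_eq_mul_div, lt_div_iff₀ hx]
      linarith
    refine ⟨E' ∪ T, Finset.subset_union_right, hE'ne.mono Finset.subset_union_left, ?_⟩
    have hbsub : ((E' ∪ T) * S) \ (E' ∪ T) ⊆ (((E' * Sbig) \ E') ∪ (T * S)) := by
      intro a ha
      rw [Finset.mem_sdiff] at ha
      obtain ⟨ha1, ha2⟩ := ha
      rw [Finset.mem_mul] at ha1
      obtain ⟨x, hx, s, hs, rfl⟩ := ha1
      rcases Finset.mem_union.mp hx with hx | hx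
      · apply Finset.mem_union_left
        rw [Finset.mem_sdiff]
        constructor
        · exact Finset.mul_mem_mul hx (Finset.mem_union_left _ hs)
        · intro hc; exact ha2 (Finset.mem_union_left _ hc)
      · exact Finset.mem_union_right _ (Finset.mul_mem_mul hx hs)
    have hb1 : ((((E' ∪ T) * S) \ (E' ∪ T)).card : ℝ) ≤
        ((E' * Sbig) \ E').card + (T * S).card := by
      calc ((((E' ∪ T) * S) \ (E' ∪ T)).card : ℝ)
          ≤ (((((E' * Sbig) \ E') ∪ (T * S))).card : ℝ) := by
            exact_mod_cast Finset.card_le_card hbsub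
        _ ≤ ((E' * Sbig) \ E').card + (T * S).card := by
            exact_mod_cast Finset.card_union_le _ _
    have hcardle : (E'.card : ℝ) ≤ (E' ∪ T).card := by
      exact_mod_cast Finset.card_le_card (Finset.subset_union_left (s₁ := E') (s₂ := T))
    have heq : (1 : ℝ) / (2 * (n + 1)) + 1 / (2 * (n + 1)) = 1 / (n + 1) := by
      have h2 : (2 * ((n:ℝ) + 1)) ≠ 0 := by positivity
      have h1 : ((n:ℝ) + 1) ≠ 0 := by positivity
      rw [← add_div, div_eq_div_iff h2 h1]
      ring
    have h1n : (0 : ℝ) < 1 / ((n : ℝ) + 1) := by positivity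
    calc ((((E' ∪ T) * S) \ (E' ∪ T)).card : ℝ)
        ≤ ((E' * Sbig) \ E').card + (T * S).card := hb1
      _ < (1 / (2 * (n + 1))) * E'.card + (1 / (2 * (n + 1))) * E'.card := by
          exact add_lt_add hE' hTS
      _ = (1 / (n + 1)) * E'.card := by rw [← add_mul, heq]
      _ ≤ (1 / (n + 1)) * (E' ∪ T).card := by
          exact mul_le_mul_of_nonneg_left hcardle (le_of_lt h1n)
  -- construct the nested Følner sequence
  choose! Ef hEf1 hEf2 hEf3 using claim
  obtain ⟨g, hg⟩ := exists_surjective_nat Γ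
  set Es : ℕ → Finset Γ :=
    fun n => Nat.rec (Ef {g 0} 0) (fun m prev => Ef (insert (g (m + 1)) prev) (m + 1)) n
    with hEsdef
  have hEs0 : Es 0 = Ef {g 0} 0 := rfl
  have hEsS : ∀ n, Es (n + 1) = Ef (insert (g (n + 1)) (Es n)) (n + 1) := fun n => rfl
  have hEsmono : ∀ n, Es n ⊆ Es (n + 1) := by
    intro n
    rw [hEsS]
    exact (Finset.subset_insert _ _).trans (hEf1 _ _)
  have hgEs : ∀ n, g n ∈ Es n := by
    intro n
    cases n with
    | zero => exact hEf1 _ _ (Finset.mem_singleton_self _)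
    | succ m => exact hEf1 _ _ (Finset.mem_insert_self _ _)
  have hEsne : ∀ n, (Es n).Nonempty := by
    intro n
    cases n with
    | zero => exact hEf2 _ _
    | succ m => exact hEf2 _ _
  have hEsb : ∀ n, (((Es n * S) \ Es n).card : ℝ) < (1 / (n + 1)) * (Es n).card := by
    intro n
    cases n with
    | zero => exact hEf3 _ _
    | succ m => exact hEf3 _ _
  -- the exhaustion
  set K : ℕ → Set V := fun n => ⋃ γ ∈ (Es n : Set Γ), (fun x => γ • x) '' VF with hKdef
  have hKmem : ∀ (n : ℕ) (v : V), v ∈ K n ↔ ∃ γ ∈ Es n, ∃ u ∈ VF, γ • u = v := by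
    intro n v
    simp [hKdef, Set.mem_smul_set]
  have hKfin : ∀ n, (K n).Finite :=
    fun n => (Es n).finite_toSet.biUnion (fun γ _ => hVFfin.image _)
  have hKne : ∀ n, (K n).Nonempty := by
    intro n
    obtain ⟨γ, hγ⟩ := hEsne n
    exact ⟨γ • v0, (hKmem n _).mpr ⟨γ, hγ, v0, hγ0, rfl⟩⟩
  have hKcard_ge : ∀ n, ((Es n).card : ℕ) ≤ Nat.card ↥(K n) := by
    intro n
    haveI : Finite ↥(K n) := hKfin n
    have hi : Function.Injective (fun x : ↥(Es n) =>
        (⟨x.1 • v0, (hKmem n _).mpr ⟨x.1, x.2, v0, hγ0, rfl⟩⟩ : ↥(K n))) := by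
      intro a b hab
      simp only [Subtype.mk.injEq] at hab
      have h1 : (b.1⁻¹ * a.1) • v0 = v0 := by rw [mul_smul, hab, inv_smul_smul]
      have h2 := hfree _ _ h1
      rw [inv_mul_eq_one] at h2
      exact Subtype.ext h2.symm
    have := Nat.card_le_card_of_injective _ hi
    rwa [Nat.card_eq_finsetCard] at this
  refine ⟨Es, K, fun n => rfl, hEsmono, ?_, ?_, ?_, ?_⟩
  · -- K monotone
    intro n
    exact Set.biUnion_subset_biUnion_left (Finset.coe_subset.mpr (hEsmono n))
  · -- vertex exhaustion
    apply Set.eq_univ_of_forall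
    intro v
    obtain ⟨γ, hγ⟩ := hmove v
    obtain ⟨m, hm⟩ := hg γ⁻¹
    apply Set.mem_iUnion.mpr ⟨m, _⟩
    exact (hKmem m v).mpr ⟨γ⁻¹, hm ▸ hgEs m, γ • v, hγ, inv_smul_smul γ v⟩
  · -- edge exhaustion
    apply Set.eq_univ_of_forall
    intro e
    obtain ⟨γ, hγ⟩ := hmoveE e
    obtain ⟨m, hm⟩ := hg γ⁻¹
    apply Set.mem_iUnion.mpr ⟨m, _⟩
    simp only [Set.mem_iUnion, Finset.mem_coe]
    exact ⟨γ⁻¹, hm ▸ hgEs m, γ • e, hγ, inv_smul_smul γ e⟩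
  · -- the boundary ratio tends to 0
    set C : ℝ := (hVFfin.toFinset.card : ℝ) * d with hC
    have hVFcardpos : 0 < hVFfin.toFinset.card := by
      rw [Finset.card_pos, Set.Finite.toFinset_nonempty]
      exact ⟨v0, hγ0⟩
    have hCpos : 0 < C := by
      rw [hC]
      have : (1 : ℝ) ≤ hVFfin.toFinset.card := by exact_mod_cast hVFcardpos
      have : (1 : ℝ) ≤ d := by exact_mod_cast hd1
      positivity
    -- the per-n boundary bound
    have hmain : ∀ n, (Nat.card {v : V // v ∈ K n ∧ ∃ e, o e = v ∧ t e ∉ K n} : ℝ) /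
        (Nat.card ↥(K n) : ℝ) ≤ C * (1 / (n + 1)) := by
      intro n
      set D : Finset Γ := (Es n * S) \ Es n with hD
      set B : Set V := {v | v ∈ K n ∧ ∃ e, o e = v ∧ t e ∉ K n} with hB
      -- key structural fact on boundary vertices
      have key : ∀ v ∈ B, ∃ e, o e = v ∧ ∃ δ ∈ D, ∃ u ∈ VF, δ • u = t e := by
        rintro v ⟨hvK, e, hoe, hte⟩
        obtain ⟨γ, hγEs, u, huVF, hγu⟩ := (hKmem n v).mp hvK
        obtain ⟨β, hβ⟩ := hmove (t e)
        refine ⟨e, hoe, β⁻¹, ?_, β • t e, hβ, inv_smul_smul β (t e)⟩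
        rw [hD, Finset.mem_sdiff]
        constructor
        · have hmem : γ⁻¹ * β⁻¹ ∈ S := by
            rw [hS, Set.Finite.mem_toFinset, hSset]
            refine ⟨γ⁻¹ • e, ?_, ?_⟩
            · rw [ho_smul, hoe, ← hγu, inv_smul_smul]
              exact huVF
            · rw [ht_smul]
              exact Set.mem_smul_set.mpr ⟨β • t e, hβ, by rw [mul_smul, inv_smul_smul]⟩
          have : β⁻¹ = γ * (γ⁻¹ * β⁻¹) := by group
          rw [this]
          exact Finset.mul_mem_mul hγEs hmem
        · intro hc
          exact hte ((hKmem n (t e)).mpr ⟨β⁻¹, hc, β • t e, hβ, inv_smul_smul β (t e)⟩)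
      -- count boundary vertices
      set EtubF : Finset E := D.biUnion (fun δ => hVFfin.toFinset.biUnion
        (fun u => (hTfinset (δ • u)).toFinset)) with hEtubF
      have hEtubcard : (EtubF.card : ℕ) ≤ D.card * (hVFfin.toFinset.card * d) := by
        calc EtubF.card
            ≤ ∑ δ ∈ D, (hVFfin.toFinset.biUnion (fun u => (hTfinset (δ • u)).toFinset)).card :=
              Finset.card_biUnion_le
          _ ≤ D.card * (hVFfin.toFinset.card * d) := by
              rw [← smul_eq_mul]
              apply Finset.sum_le_card_nsmul
              intro δ hδ
              calc (hVFfin.toFinset.biUnion (fun u => (hTfinset (δ • u)).toFinset)).card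
                  ≤ ∑ u ∈ hVFfin.toFinset, (hTfinset (δ • u)).toFinset.card :=
                    Finset.card_biUnion_le
                _ ≤ hVFfin.toFinset.card * d := by
                    rw [← smul_eq_mul]
                    exact Finset.sum_le_card_nsmul _ _ _ (fun u _ => hTcard (δ • u))
      choose! eW heW1 heW2 using key
      have hBbound : Nat.card ↥B ≤ D.card * (hVFfin.toFinset.card * d) := by
        have hiB : Function.Injective (fun x : ↥B =>
            (⟨eW x.1, by
              obtain ⟨δ, hδ, u, hu, hδu⟩ := heW2 x.1 x.2
              exact Finset.mem_biUnion.mpr ⟨δ, hδ, Finset.mem_biUnion.mpr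
                ⟨u, hVFfin.mem_toFinset.mpr hu,
                  (hTfinset (δ • u)).mem_toFinset.mpr hδu.symm⟩⟩⟩ : {e // e ∈ EtubF})) := by
          intro a b hab
          simp only [Subtype.mk.injEq] at hab
          have h1 := heW1 a.1 a.2
          have h2 := heW1 b.1 b.2
          apply Subtype.ext
          rw [← h1, ← h2, hab]
        have h := Nat.card_le_card_of_injective _ hiB
        rw [Nat.card_eq_finsetCard] at h
        exact le_trans h hEtubcard
      -- assemble the estimate
      have hDlt : (D.card : ℝ) < (1 / (n + 1)) * (Es n).card := hEsb n
      have hEscard_pos : (0 : ℝ) < (Es n).card := by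
        exact_mod_cast Finset.card_pos.mpr (hEsne n)
      have hKpos : (0 : ℝ) < Nat.card ↥(K n) := by
        have := hKcard_ge n
        have h2 : (0:ℕ) < (Es n).card := Finset.card_pos.mpr (hEsne n)
        exact_mod_cast lt_of_lt_of_le h2 this
      have hnum : (Nat.card {v : V // v ∈ K n ∧ ∃ e, o e = v ∧ t e ∉ K n} : ℝ) ≤
          (D.card : ℝ) * (hVFfin.toFinset.card * d) := by
        exact_mod_cast hBbound
      have hKge : ((Es n).card : ℝ) ≤ (Nat.card ↥(K n) : ℝ) := by exact_mod_cast hKcard_ge n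
      rw [div_le_iff₀ hKpos]
      have h1n : (0 : ℝ) < 1 / ((n : ℝ) + 1) := by positivity
      calc (Nat.card {v : V // v ∈ K n ∧ ∃ e, o e = v ∧ t e ∉ K n} : ℝ)
          ≤ (D.card : ℝ) * (hVFfin.toFinset.card * d) := hnum
        _ ≤ ((1 / (n + 1)) * (Es n).card) * (hVFfin.toFinset.card * d) := by
            apply mul_le_mul_of_nonneg_right (le_of_lt hDlt)
            positivity
        _ = (C * (1 / (n + 1))) * (Es n).card := by rw [hC]; ring
        _ ≤ (C * (1 / (n + 1))) * (Nat.card ↥(K n) : ℝ) := by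
            apply mul_le_mul_of_nonneg_left hKge
            positivity
    -- squeeze
    apply squeeze_zero (fun n => by positivity) hmain
    have := (tendsto_one_div_add_atTop_nhds_zero_nat).const_mul C
    simpa using this
end
end

section
/- Let {Kₙ} be an amenable exhaustion of X and let B be a bounded operator on ℓ²(VX) commuting with the Γ-action. Then lim_{n→∞} (1/|VKₙ|)·Σ_{v∈VKₙ} ⟨Bδ_v, δ_v⟩ = (1/|𝓕₀|)·Tr_Γ(B), where Tr_Γ(B) = Σ_{v∈𝓕₀} ⟨Bδ_v, δ_v⟩ and |𝓕₀| is the number of Γ-orbits of vertices. Equivalently, Tr(P(Kₙ)BP(Kₙ))/|VKₙ| → Tr_Γ(B)/|𝓕₀|, where P(Kₙ) is the orthogonal projection of ℓ²(VX) onto ℓ²(VKₙ). -/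
noncomputable section

private lemma trace_aux_abs (a k N c : ℝ) (hk : 1 ≤ k) (hN : 1 ≤ N)
    (h1 : N * a ≤ k + N * c) (h2 : k ≤ N * a + N * c) :
    |a / k - 1 / N| ≤ c / k := by
  have hk0 : 0 < k := by linarith
  have hN0 : 0 < N := by linarith
  have e1 : a / k - 1 / N = (N * a - k) / (N * k) := by
    field_simp
  rw [e1, abs_div, abs_of_pos (mul_pos hN0 hk0), div_le_div_iff₀ (mul_pos hN0 hk0) hk0]
  have h3 : |N * a - k| ≤ N * c := abs_le.mpr ⟨by linarith, by linarith⟩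
  calc |N * a - k| * k ≤ (N * c) * k := by
        apply mul_le_mul_of_nonneg_right h3 (by linarith)
    _ = c * (N * k) := by ring

set_option maxHeartbeats 1000000 in

/-- Lemma 7.5: for an amenable exhaustion `{Kₙ}` of `X` and any bounded operator `B`
on `ℓ²(VX)` commuting with the `Γ`-action,
`Tr(P(Kₙ) B P(Kₙ))/|VKₙ| → Tr_Γ(B)/|𝓕₀|`. -/
theorem trace_approximation
    {V E Γ : Type*} [Countable V] [Countable E] [Infinite V] [DecidableEq V]
    [Group Γ] [Countable Γ] [MulAction Γ V] [MulAction Γ E]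
    -- the graph in the sense of Serre, connected, countably infinite, bounded degree
    (o t : E → V) (bar : E → E)
    (hbar_invol : ∀ e, bar (bar e) = e)
    (hbar_ne : ∀ e, bar e ≠ e)
    (ho_bar : ∀ e, o (bar e) = t e)
    (hconn : ∀ u v : V, Relation.ReflTransGen (fun a b => ∃ e, o e = a ∧ t e = b) u v)
    (d : ℕ) (hfib : ∀ v, {e | o e = v}.Finite)
    (hdeg : ∀ v, Nat.card {e // o e = v} ≤ d)
    -- Γ acts by automorphisms of the graph
    (ho_smul : ∀ (γ : Γ) (e : E), o (γ • e) = γ • o e)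
    (ht_smul : ∀ (γ : Γ) (e : E), t (γ • e) = γ • t e)
    (hbar_smul : ∀ (γ : Γ) (e : E), bar (γ • e) = γ • bar e)
    -- without inversions
    (hnoinv : ∀ (γ : Γ) (e : E), γ • e ≠ bar e)
    -- freely
    (hfree : ∀ (γ : Γ) (v : V), γ • v = v → γ = 1)
    -- finite connected fundamental domain F = (VF, EF)
    (EF : Set E) (hEFfin : EF.Finite)
    (hEF : ∀ e : E, ∃! f, f ∈ EF ∧ ∃ γ : Γ, γ • e = f ∨ γ • bar e = f)
    (VF : Set V) (hVF : VF = o '' EF ∪ t '' EF)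
    (hFconn : ∀ u v : V, u ∈ VF → v ∈ VF →
      Relation.ReflTransGen
        (fun a b => ∃ e, (e ∈ EF ∨ bar e ∈ EF) ∧ o e = a ∧ t e = b) u v)
    -- 𝓕₀ ⊆ VF: one representative of each Γ-orbit of vertices
    (F0 : Set V) (hF0sub : F0 ⊆ VF) (hF0fin : F0.Finite)
    (hF0 : ∀ v : V, ∃! w, w ∈ F0 ∧ ∃ γ : Γ, γ • v = w)
    -- an amenable exhaustion Kₙ = ∪_{γ∈Eₙ} γF of X
    (Es : ℕ → Finset Γ) (K : ℕ → Set V)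
    (hK : ∀ n, K n = ⋃ γ ∈ (Es n : Set Γ), (fun x => γ • x) '' VF)
    (hKmono : ∀ n, K n ⊆ K (n + 1))
    (hKunion : (⋃ n, K n) = (Set.univ : Set V))
    (hKamen : Filter.Tendsto
      (fun n => (Nat.card {v : V // v ∈ K n ∧ ∃ e, o e = v ∧ t e ∉ K n} : ℝ) /
        (Nat.card (K n) : ℝ)) Filter.atTop (nhds 0))
    -- B: a bounded operator on ℓ²(VX) commuting with the Γ-action
    (B : lp (fun _ : V => ℂ) 2 →L[ℂ] lp (fun _ : V => ℂ) 2)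
    (hBcomm : ∀ (γ : Γ) (f f' : lp (fun _ : V => ℂ) 2),
      (∀ x, f' x = f (γ⁻¹ • x)) → ∀ x : V, (B f') x = (B f) (γ⁻¹ • x)) :
    Filter.Tendsto
      (fun n => (1 / (Nat.card (K n) : ℂ)) *
        ∑' v : K n, (B (lp.single 2 (v : V) 1)) (v : V))
      Filter.atTop
      (nhds ((1 / (Nat.card F0 : ℂ)) *
        ∑' v : F0, (B (lp.single 2 (v : V) 1)) (v : V))) := by
  classical
  set f : V → ℂ := fun v => (B (lp.single 2 v 1)) v with hfdef
  -- invariance of diagonal entries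
  have hf_inv : ∀ (γ : Γ) (v : V), f (γ • v) = f v := by
    intro γ v
    have hpt : ∀ x : V, (lp.single 2 (γ • v) (1:ℂ) : lp (fun _ : V => ℂ) 2) x
        = (lp.single 2 v (1:ℂ) : lp (fun _ : V => ℂ) 2) (γ⁻¹ • x) := by
      intro x
      by_cases h : x = γ • v
      · subst h
        rw [lp.single_apply_self, inv_smul_smul, lp.single_apply_self]
      · rw [lp.single_apply_ne _ _ _ h, lp.single_apply_ne]
        intro h2
        exact h (by rw [← h2, smul_inv_smul])
    have := hBcomm γ (lp.single 2 v 1) (lp.single 2 (γ • v) 1) hpt (γ • v)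
    simpa [hfdef, inv_smul_smul] using this
  -- bound on diagonal entries
  have hf_bd : ∀ v : V, ‖f v‖ ≤ ‖B‖ := by
    intro v
    have h1 : ‖(B (lp.single 2 v 1)) v‖ ≤ ‖B (lp.single 2 v 1)‖ :=
      lp.norm_apply_le_norm (by norm_num) _ v
    have h3 : ‖(lp.single 2 v (1:ℂ) : lp (fun _ : V => ℂ) 2)‖ = 1 := by
      have := lp.norm_single (p := 2) (E := fun _ : V => ℂ)
        (by norm_num) v (1:ℂ)
      simpa using this
    calc ‖f v‖ ≤ ‖B (lp.single 2 v 1)‖ := h1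
      _ ≤ ‖B‖ * ‖(lp.single 2 v (1:ℂ) : lp (fun _ : V => ℂ) 2)‖ := B.le_opNorm _
      _ = ‖B‖ := by rw [h3, mul_one]
  -- finiteness
  have hVFfin : VF.Finite := by
    rw [hVF]; exact (hEFfin.image o).union (hEFfin.image t)
  have hKfin : ∀ n, (K n).Finite := by
    intro n; rw [hK n]
    exact Set.Finite.biUnion (Es n).finite_toSet (fun γ _ => hVFfin.image _)
  have hinj : ∀ w : V, Function.Injective (fun γ : Γ => γ • w) := by
    intro w γ δ h
    have h1 : (δ⁻¹ * γ) • w = w := by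
      rw [mul_smul]; simp only at h; rw [h, inv_smul_smul]
    have := hfree _ _ h1
    rwa [inv_mul_eq_one, eq_comm] at this
  have hAfin : ∀ (n : ℕ) (w : V), {γ : Γ | γ • w ∈ K n}.Finite := by
    intro n w
    exact Set.Finite.preimage ((hinj w).injOn) (hKfin n)
  -- boundary set
  have hBdfin : ∀ n, {v : V | v ∈ K n ∧ ∃ e, o e = v ∧ t e ∉ K n}.Finite := by
    intro n; exact (hKfin n).subset (fun v hv => hv.1)
  set KF : ℕ → Finset V := fun n => (hKfin n).toFinset with hKF
  set F0F : Finset V := hF0fin.toFinset with hF0F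
  set A : ℕ → V → Finset Γ := fun n w => (hAfin n w).toFinset with hA
  set Bd : ℕ → Finset V := fun n => (hBdfin n).toFinset with hBd
  set VFF : Finset V := hVFfin.toFinset with hVFF
  -- partition of K n into orbit pieces
  have hpart : ∀ n, KF n = F0F.biUnion (fun w => (A n w).image (fun γ => γ • w)) := by
    intro n; ext v
    simp only [hKF, hA, hF0F, Set.Finite.mem_toFinset, Finset.mem_biUnion, Finset.mem_image,
      Set.mem_setOf_eq]
    constructor
    · intro hv
      obtain ⟨w, ⟨hwF0, γ, hγ⟩, _⟩ := hF0 v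
      refine ⟨w, hwF0, γ⁻¹, ?_, ?_⟩
      · rw [← hγ, inv_smul_smul]; exact hv
      · rw [← hγ, inv_smul_smul]
    · rintro ⟨w, hw, γ, hγ, rfl⟩; exact hγ
  have hdisj : ∀ n, ∀ w ∈ F0F, ∀ w' ∈ F0F, w ≠ w' →
      Disjoint ((A n w).image (fun γ => γ • w)) ((A n w').image (fun γ => γ • w')) := by
    intro n w hw w' hw' hne
    rw [Finset.disjoint_left]
    rintro v hv hv'
    simp only [hA, Finset.mem_image, Set.Finite.mem_toFinset, Set.mem_setOf_eq] at hv hv'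
    obtain ⟨γ, hγK, hγ⟩ := hv
    obtain ⟨δ, hδK, hδ⟩ := hv'
    have hwF0 : w ∈ F0 := by simpa [hF0F, Set.Finite.mem_toFinset] using hw
    have hw'F0 : w' ∈ F0 := by simpa [hF0F, Set.Finite.mem_toFinset] using hw'
    apply hne
    obtain ⟨w0, _, huniq⟩ := hF0 v
    have h1 : w ∈ F0 ∧ ∃ g : Γ, g • v = w :=
      ⟨hwF0, γ⁻¹, by rw [← hγ, inv_smul_smul]⟩
    have h2 : w' ∈ F0 ∧ ∃ g : Γ, g • v = w' :=
      ⟨hw'F0, δ⁻¹, by rw [← hδ, inv_smul_smul]⟩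
    rw [huniq w h1, huniq w' h2]
  have hcard : ∀ n, (KF n).card = ∑ w ∈ F0F, (A n w).card := by
    intro n
    rw [hpart n, Finset.card_biUnion (hdisj n)]
    exact Finset.sum_congr rfl fun w _ => Finset.card_image_of_injective _ (hinj w)
  have hsum : ∀ n, ∑ v ∈ KF n, f v = ∑ w ∈ F0F, ((A n w).card : ℂ) * f w := by
    intro n
    rw [hpart n, Finset.sum_biUnion]
    · refine Finset.sum_congr rfl fun w _ => ?_
      rw [Finset.sum_image (fun a _ b _ h => hinj w h)]
      rw [Finset.sum_congr rfl (fun γ _ => hf_inv γ w), Finset.sum_const,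
        nsmul_eq_mul]
    · intro w hw w' hw' hne
      exact hdisj n w (by simpa using hw) w' (by simpa using hw') hne
  -- crossing lemma
  have hcross : ∀ (n : ℕ) (γ : Γ) (u v' : V), u ∈ VF → v' ∈ VF →
      γ • u ∈ K n → γ • v' ∉ K n →
      ∃ b : V, (b ∈ K n ∧ ∃ e, o e = b ∧ t e ∉ K n) ∧ γ⁻¹ • b ∈ VF := by
    intro n γ u v' hu hv' hin hout
    have hchain := hFconn u v' hu hv'
    clear hu hv'
    revert hout
    induction hchain with
    | refl => intro hout; exact absurd hin hout
    | @tail b c hab hbc ih =>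
      intro hout
      by_cases hb : γ • b ∈ K n
      · obtain ⟨e, heEF, heo, het⟩ := hbc
        refine ⟨γ • b, ⟨hb, γ • e, ?_, ?_⟩, ?_⟩
        · rw [ho_smul, heo]
        · rw [ht_smul, het]; exact hout
        · rw [inv_smul_smul, hVF]
          rcases heEF with h | h
          · exact Or.inl ⟨e, h, heo⟩
          · refine Or.inr ⟨bar e, h, ?_⟩
            rw [← ho_bar, hbar_invol, heo]
      · exact ih hb
  -- cardinality comparison
  have hAdiff : ∀ (n : ℕ), ∀ w ∈ F0, ∀ w' ∈ F0,
      (A n w).card ≤ (A n w').card + VFF.card * (Bd n).card := by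
    intro n w hw w' hw'
    have hsub : A n w ⊆ (A n w') ∪ ((A n w) \ (A n w')) := by
      intro γ hγ
      by_cases h : γ ∈ A n w'
      · exact Finset.mem_union_left _ h
      · exact Finset.mem_union_right _ (Finset.mem_sdiff.mpr ⟨hγ, h⟩)
    have h1 : (A n w).card ≤ (A n w').card + ((A n w) \ (A n w')).card :=
      le_trans (Finset.card_le_card hsub) (Finset.card_union_le _ _)
    have hspec : ∀ γ ∈ (A n w) \ (A n w'), γ • w ∈ K n ∧ γ • w' ∉ K n := by
      intro γ hγ
      rw [Finset.mem_sdiff] at hγ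
      constructor
      · have := hγ.1; simpa [hA, Set.Finite.mem_toFinset] using this
      · have := hγ.2; simpa [hA, Set.Finite.mem_toFinset] using this
    set φ : Γ → V := fun γ =>
      if h : γ • w ∈ K n ∧ γ • w' ∉ K n then
        (hcross n γ w w' (hF0sub hw) (hF0sub hw') h.1 h.2).choose
      else γ • w with hφ
    have hφspec : ∀ γ ∈ (A n w) \ (A n w'),
        (φ γ ∈ K n ∧ ∃ e, o e = φ γ ∧ t e ∉ K n) ∧ γ⁻¹ • φ γ ∈ VF := by
      intro γ hγ
      have h := hspec γ hγ
      have : φ γ = (hcross n γ w w' (hF0sub hw) (hF0sub hw') h.1 h.2).choose := by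
        rw [hφ]; exact dif_pos h
      rw [this]
      exact (hcross n γ w w' (hF0sub hw) (hF0sub hw') h.1 h.2).choose_spec
    have hDcard : ((A n w) \ (A n w')).card ≤ VFF.card * (Bd n).card := by
      apply Finset.card_le_mul_card_image_of_maps_to (f := φ) (t := Bd n)
      · intro γ hγ
        have := (hφspec γ hγ).1
        simpa [hBd, Set.Finite.mem_toFinset] using this
      · intro b _
        apply Finset.card_le_card_of_injOn (fun γ => γ⁻¹ • b)
        · intro γ hγ
          rw [Finset.mem_coe, Finset.mem_filter] at hγ
          have := (hφspec γ hγ.1).2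
          rw [hγ.2] at this
          simpa [hVFF, Set.Finite.mem_toFinset] using this
        · intro γ _ δ _ h
          simp only at h
          have h1 : (δ * γ⁻¹) • b = b := by rw [mul_smul, h, smul_inv_smul]
          have h2 := hfree _ _ h1
          rw [mul_inv_eq_one] at h2
          exact h2.symm
    omega
  -- translate Nat.card and tsums
  have hNatK : ∀ n, Nat.card (K n) = (KF n).card := by
    intro n
    rw [Nat.card_coe_set_eq, Set.ncard_eq_toFinset_card _ (hKfin n)]
  have hNatF0 : Nat.card F0 = F0F.card := by
    rw [Nat.card_coe_set_eq, Set.ncard_eq_toFinset_card _ hF0fin]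
  have hNatBd : ∀ n, Nat.card {v : V // v ∈ K n ∧ ∃ e, o e = v ∧ t e ∉ K n} = (Bd n).card := by
    intro n
    show Nat.card ↥{v : V | v ∈ K n ∧ ∃ e, o e = v ∧ t e ∉ K n} = (Bd n).card
    rw [Nat.card_coe_set_eq, Set.ncard_eq_toFinset_card _ (hBdfin n)]
  have htsumK : ∀ n, (∑' v : K n, (B (lp.single 2 (v : V) 1)) (v : V)) = ∑ v ∈ KF n, f v := by
    intro n
    haveI := (hKfin n).fintype
    rw [tsum_fintype]
    exact (Finset.sum_subtype (KF n)
      (fun x => by simp [hKF, Set.Finite.mem_toFinset]) f).symm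
  have htsumF0 : (∑' v : F0, (B (lp.single 2 (v : V) 1)) (v : V)) = ∑ w ∈ F0F, f w := by
    haveI := hF0fin.fintype
    rw [tsum_fintype]
    exact (Finset.sum_subtype F0F
      (fun x => by simp [hF0F, Set.Finite.mem_toFinset]) f).symm
  -- positivity
  have hF0ne : F0F.Nonempty := by
    obtain ⟨u0⟩ : Nonempty V := inferInstance
    obtain ⟨w, ⟨hwF0, _⟩, _⟩ := hF0 u0
    exact ⟨w, by simpa [hF0F, Set.Finite.mem_toFinset] using hwF0⟩
  have hN0pos : 0 < F0F.card := Finset.card_pos.mpr hF0ne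
  obtain ⟨v0⟩ : Nonempty V := inferInstance
  have hv0 : ∃ N, v0 ∈ K N := by
    have : v0 ∈ ⋃ n, K n := by rw [hKunion]; trivial
    simpa using this
  obtain ⟨N, hN⟩ := hv0
  have hKmono' : Monotone K := monotone_nat_of_le_succ hKmono
  have hkpos : ∀ n, N ≤ n → 0 < (KF n).card := by
    intro n hn
    refine Finset.card_pos.mpr ⟨v0, ?_⟩
    simp only [hKF, Set.Finite.mem_toFinset]
    exact hKmono' hn hN
  -- nat inequalities
  have hhigh : ∀ n, ∀ w ∈ F0F, F0F.card * (A n w).card ≤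
      (KF n).card + F0F.card * (VFF.card * (Bd n).card) := by
    intro n w hw
    have hwF0 : w ∈ F0 := by simpa [hF0F, Set.Finite.mem_toFinset] using hw
    calc F0F.card * (A n w).card = ∑ _w' ∈ F0F, (A n w).card := by
          rw [Finset.sum_const, smul_eq_mul]
      _ ≤ ∑ w' ∈ F0F, ((A n w').card + VFF.card * (Bd n).card) := by
          refine Finset.sum_le_sum fun w' hw' => ?_
          exact hAdiff n w hwF0 w' (by simpa [hF0F, Set.Finite.mem_toFinset] using hw')
      _ = (KF n).card + F0F.card * (VFF.card * (Bd n).card) := by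
          rw [Finset.sum_add_distrib, Finset.sum_const, smul_eq_mul, hcard n]
  have hlow : ∀ n, ∀ w ∈ F0F, (KF n).card ≤
      F0F.card * (A n w).card + F0F.card * (VFF.card * (Bd n).card) := by
    intro n w hw
    have hwF0 : w ∈ F0 := by simpa [hF0F, Set.Finite.mem_toFinset] using hw
    calc (KF n).card = ∑ w' ∈ F0F, (A n w').card := hcard n
      _ ≤ ∑ _w' ∈ F0F, ((A n w).card + VFF.card * (Bd n).card) := by
          refine Finset.sum_le_sum fun w' hw' => ?_
          exact hAdiff n w' (by simpa [hF0F, Set.Finite.mem_toFinset] using hw') w hwF0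
      _ = F0F.card * (A n w).card + F0F.card * (VFF.card * (Bd n).card) := by
          rw [Finset.sum_add_distrib, Finset.sum_const, Finset.sum_const,
            smul_eq_mul, smul_eq_mul]
  have hKamen' : Filter.Tendsto (fun n => ((Bd n).card : ℝ) / ((KF n).card : ℝ))
      Filter.atTop (nhds 0) := by
    have h := hKamen
    simp only [hNatBd, hNatK] at h
    exact h
  rw [← tendsto_sub_nhds_zero_iff]
  apply squeeze_zero_norm'
    (a := fun n => ‖B‖ * (F0F.card : ℝ) * (VFF.card : ℝ) *
      (((Bd n).card : ℝ) / ((KF n).card : ℝ)))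
  · filter_upwards [Filter.eventually_ge_atTop N] with n hn
    have hk1 : (1:ℝ) ≤ ((KF n).card : ℝ) := by exact_mod_cast hkpos n hn
    have hN1 : (1:ℝ) ≤ (F0F.card : ℝ) := by exact_mod_cast hN0pos
    simp only [hNatK, hNatF0, htsumK, htsumF0, hsum]
    have hrepr : (1 / ((KF n).card : ℂ)) * (∑ w ∈ F0F, ((A n w).card : ℂ) * f w)
        - (1 / (F0F.card : ℂ)) * ∑ w ∈ F0F, f w
        = ∑ w ∈ F0F, (((A n w).card : ℂ) / ((KF n).card : ℂ) - 1 / (F0F.card : ℂ)) * f w := by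
      rw [Finset.mul_sum, Finset.mul_sum, ← Finset.sum_sub_distrib]
      exact Finset.sum_congr rfl fun w _ => by ring
    rw [hrepr]
    have hterm : ∀ w ∈ F0F,
        ‖(((A n w).card : ℂ) / ((KF n).card : ℂ) - 1 / (F0F.card : ℂ)) * f w‖
        ≤ ((VFF.card : ℝ) * ((Bd n).card : ℝ) / ((KF n).card : ℝ)) * ‖B‖ := by
      intro w hw
      have hcast : (((A n w).card : ℂ) / ((KF n).card : ℂ) - 1 / (F0F.card : ℂ))
          = ((((A n w).card : ℝ) / ((KF n).card : ℝ) - 1 / ((F0F.card : ℝ)) : ℝ) : ℂ) := by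
        push_cast; ring
      rw [norm_mul, hcast, Complex.norm_real, Real.norm_eq_abs]
      have h1 : ((F0F.card : ℝ)) * ((A n w).card : ℝ)
          ≤ ((KF n).card : ℝ) + (F0F.card : ℝ) * ((VFF.card : ℝ) * ((Bd n).card : ℝ)) := by
        exact_mod_cast hhigh n w hw
      have h2 : ((KF n).card : ℝ) ≤ (F0F.card : ℝ) * ((A n w).card : ℝ)
          + (F0F.card : ℝ) * ((VFF.card : ℝ) * ((Bd n).card : ℝ)) := by
        exact_mod_cast hlow n w hw
      have habs : |((A n w).card : ℝ) / ((KF n).card : ℝ) - 1 / (F0F.card : ℝ)|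
          ≤ (VFF.card : ℝ) * ((Bd n).card : ℝ) / ((KF n).card : ℝ) :=
        trace_aux_abs _ _ _ _ hk1 hN1 h1 h2
      exact mul_le_mul habs (hf_bd w) (norm_nonneg _) (by positivity)
    calc ‖∑ w ∈ F0F, (((A n w).card : ℂ) / ((KF n).card : ℂ) - 1 / (F0F.card : ℂ)) * f w‖
        ≤ ∑ w ∈ F0F, ‖(((A n w).card : ℂ) / ((KF n).card : ℂ) - 1 / (F0F.card : ℂ)) * f w‖ :=
          norm_sum_le _ _
      _ ≤ ∑ _w ∈ F0F, ((VFF.card : ℝ) * ((Bd n).card : ℝ) / ((KF n).card : ℝ)) * ‖B‖ :=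
          Finset.sum_le_sum hterm
      _ = ‖B‖ * (F0F.card : ℝ) * (VFF.card : ℝ) * (((Bd n).card : ℝ) / ((KF n).card : ℝ)) := by
          rw [Finset.sum_const, nsmul_eq_mul]
          ring
  · have h := hKamen'.const_mul (‖B‖ * (F0F.card : ℝ) * (VFF.card : ℝ))
    rw [mul_zero] at h
    exact h
end
end
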